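/- arXiv:1302.6664 — 2 statements merged into one kernel-verified Lean document; each statement's English description precedes it below -/
import Mathlib

section
/- Let F be a finite field in which -1 is not a square. Suppose E ⊆ P (the paraboloid in F^3) is such that for all point sets A ⊆ F^2 and line sets L with |E|/2 ≤ |A|, |L| ≤ 2|E|, one has |I(A,L)| ≤ C|A|^α. Then |{(a,b,c,d) ∈ E^4 : a + b = c + d}| ≤ C'|E|(|E| + |E|^α) for an absolute constant C' depending on C. -/
/-- A line in the plane `F × F`. -/
def IsLine {F : Type} [Field F] (ℓ : Set (F × F)) : Prop :=
  ∃ a b c : F, (a, b) ≠ (0, 0) ∧ ℓ = {x : F × F | a * x.1 + b * x.2 = c}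

/-- The paraboloid `{(ω, ω·ω) : ω ∈ F²} ⊆ F³`. -/
def Paraboloid (F : Type) [Field F] : Set ((F × F) × F) :=
  {p | p.2 = p.1.1 * p.1.1 + p.1.2 * p.1.2}

/-- The number of incidences between a point set and a line set. -/
noncomputable def incCount {F : Type} (A : Finset (F × F)) (L : Finset (Set (F × F))) : ℕ :=
  Set.ncard {p : (F × F) × Set (F × F) | p.1 ∈ A ∧ p.2 ∈ L ∧ p.1 ∈ p.2}

namespace EnergyAux

def lineOf {F : Type} [Field F] (z : F × F) : Set (F × F) :=
  {x | z.1 * x.1 + z.2 * x.2 = z.1 * z.1 + z.2 * z.2}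

lemma two_ne_zero' {F : Type} [Field F] (hsq : ¬ ∃ i : F, i ^ 2 = -1) : (2 : F) ≠ 0 := by
  intro h
  exact hsq ⟨1, by rw [one_pow]; linear_combination h⟩

lemma sq_add_sq_eq_zero {F : Type} [Field F] (hsq : ¬ ∃ i : F, i ^ 2 = -1) {x y : F}
    (h : x * x + y * y = 0) : x = 0 ∧ y = 0 := by
  by_cases hy : y = 0
  · subst hy
    simp only [mul_zero, add_zero] at h
    exact ⟨mul_self_eq_zero.mp h, rfl⟩
  · exfalso
    exact hsq ⟨x / y, by field_simp; linear_combination h⟩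

lemma lineOf_inj {F : Type} [Field F] (hsq : ¬ ∃ i : F, i ^ 2 = -1) :
    Function.Injective (lineOf (F := F)) := by
  intro z w h
  have hz : z ∈ lineOf z := by simp [lineOf]
  have hw : w ∈ lineOf w := by simp [lineOf]
  have h1 : z ∈ lineOf w := by rw [← h]; exact hz
  have h2 : w ∈ lineOf z := by rw [h]; exact hw
  simp only [lineOf, Set.mem_setOf_eq] at h1 h2
  have key : (z.1 - w.1) * (z.1 - w.1) + (z.2 - w.2) * (z.2 - w.2) = 0 := by
    linear_combination -h1 - h2
  obtain ⟨k1, k2⟩ := sq_add_sq_eq_zero hsq key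
  exact Prod.ext (sub_eq_zero.mp k1) (sub_eq_zero.mp k2)

lemma isLine_lineOf {F : Type} [Field F] {z : F × F} (hz : z ≠ 0) : IsLine (lineOf z) := by
  refine ⟨z.1, z.2, z.1 * z.1 + z.2 * z.2, ?_, rfl⟩
  intro h
  apply hz
  exact Prod.ext (Prod.mk.injEq _ _ _ _ ▸ h : _).1 ((Prod.mk.injEq _ _ _ _ ▸ h : _).2)

lemma key_iff {F : Type} [Field F] (h2 : (2 : F) ≠ 0) {a b c : (F × F) × F}
    (ha : a ∈ Paraboloid F) (hb : b ∈ Paraboloid F) (hc : c ∈ Paraboloid F) :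
    (b.1 - a.1) ∈ lineOf (c.1 - a.1) ↔ a + b - c ∈ Paraboloid F := by
  obtain ⟨⟨u1, u2⟩, ut⟩ := a
  obtain ⟨⟨v1, v2⟩, vt⟩ := b
  obtain ⟨⟨y1, y2⟩, yt⟩ := c
  simp only [Paraboloid, Set.mem_setOf_eq] at ha hb hc
  subst ha; subst hb; subst hc
  simp only [lineOf, Paraboloid, Set.mem_setOf_eq, Prod.mk_sub_mk, Prod.mk_add_mk,
    Prod.fst_sub, Prod.snd_sub, Prod.fst_add, Prod.snd_add]
  constructor <;> intro h
  · linear_combination 2 * h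
  · have h' : (2 : F) * ((y1 - u1) * (v1 - u1) + (y2 - u2) * (v2 - u2)) =
        (2 : F) * ((y1 - u1) * (y1 - u1) + (y2 - u2) * (y2 - u2)) := by linear_combination h
    exact mul_left_cancel₀ h2 h'

end EnergyAux


open EnergyAux in
/-- If `E ⊆ P` satisfies an incidence estimate `|I(A,L)| ≤ C|A|^α` for all point/line
sets of size comparable to `|E|`, then the additive energy of `E` satisfies
`|{(a,b,c,d) ∈ E⁴ : a+b = c+d}| ≤ C'|E|(|E| + |E|^α)` for a constant `C'` depending
only on `C` (and `α`). -/
theorem energy_from_incidence (C α : ℝ) (hC : 0 ≤ C) :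
    ∃ C' : ℝ, 0 ≤ C' ∧
      ∀ (F : Type) [Field F] [Fintype F] [DecidableEq F],
        (¬ ∃ i : F, i ^ 2 = -1) →
        ∀ E : Finset ((F × F) × F), ↑E ⊆ Paraboloid F →
        (∀ (A : Finset (F × F)) (L : Finset (Set (F × F))),
            (∀ ℓ ∈ L, IsLine ℓ) →
            (E.card : ℝ) / 2 ≤ A.card → (A.card : ℝ) ≤ 2 * E.card →
            (E.card : ℝ) / 2 ≤ L.card → (L.card : ℝ) ≤ 2 * E.card →
            (incCount A L : ℝ) ≤ C * (A.card : ℝ) ^ α) →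
        ((((E ×ˢ E ×ˢ E ×ˢ E).filter
            (fun q => q.1 + q.2.1 = q.2.2.1 + q.2.2.2)).card : ℝ) ≤
          C' * E.card * ((E.card : ℝ) + (E.card : ℝ) ^ α)) := by
  classical
  refine ⟨C + 1, by positivity, ?_⟩
  intro F _ _ _ hsq E hE hinc
  classical
  set N := E.card with hNdef
  have hrpow : (0 : ℝ) ≤ (N : ℝ) ^ α := Real.rpow_nonneg (Nat.cast_nonneg N) α
  by_cases hN2 : 2 ≤ N
  swap
  · -- |E| ≤ 1 : the energy is at most N ^ 4 ≤ 1
    have hle : ((E ×ˢ E ×ˢ E ×ˢ E).filter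
        (fun q => q.1 + q.2.1 = q.2.2.1 + q.2.2.2)).card ≤ N ^ 4 := by
      calc ((E ×ˢ E ×ˢ E ×ˢ E).filter
            (fun q => q.1 + q.2.1 = q.2.2.1 + q.2.2.2)).card
          ≤ (E ×ˢ E ×ˢ E ×ˢ E).card := Finset.card_filter_le _ _
        _ = N ^ 4 := by simp [Finset.card_product]; ring
    interval_cases N
    · have h0 : ((E ×ˢ E ×ˢ E ×ˢ E).filter
          (fun q => q.1 + q.2.1 = q.2.2.1 + q.2.2.2)).card = 0 := le_antisymm (by simpa using hle) (Nat.zero_le _)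
      rw [h0]
      push_cast
      nlinarith [hrpow]
    · have h1 : ((E ×ˢ E ×ˢ E ×ˢ E).filter
          (fun q => q.1 + q.2.1 = q.2.2.1 + q.2.2.2)).card ≤ 1 := by simpa using hle
      have : ((1:ℕ) : ℝ) ^ α = 1 := by
        rw [Nat.cast_one, Real.one_rpow]
      calc (((E ×ˢ E ×ˢ E ×ˢ E).filter
            (fun q => q.1 + q.2.1 = q.2.2.1 + q.2.2.2)).card : ℝ)
          ≤ 1 := by exact_mod_cast h1
        _ ≤ (C + 1) * 1 * ((1:ℝ) + 1) := by nlinarith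
        _ = (C + 1) * ((1:ℕ):ℝ) * (((1:ℕ):ℝ) + ((1:ℕ):ℝ) ^ α) := by
            rw [this]; push_cast; ring
  · have h2 : (2 : F) ≠ 0 := two_ne_zero' hsq
    have hproj : ∀ p ∈ E, ∀ q ∈ E, p.1 = q.1 → p = q := by
      intro p hp q hq h
      have hp' := hE hp
      have hq' := hE hq
      simp only [Paraboloid, Set.mem_setOf_eq] at hp' hq'
      exact Prod.ext h (by rw [hp', hq', h])
    -- Step 1 : energy ≤ triples count
    have step1 : ((E ×ˢ E ×ˢ E ×ˢ E).filter
          (fun q => q.1 + q.2.1 = q.2.2.1 + q.2.2.2)).card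
        ≤ ((E ×ˢ E ×ˢ E).filter
          (fun r => r.1 + r.2.1 - r.2.2 ∈ Paraboloid F)).card := by
      apply Finset.card_le_card_of_injOn (fun q => (q.1, q.2.1, q.2.2.1))
      · rintro ⟨a, b, c, d⟩ hq
        simp only [Finset.mem_coe, Finset.mem_filter, Finset.mem_product] at hq ⊢
        obtain ⟨⟨ha, hb, hc, hd⟩, he⟩ := hq
        refine ⟨⟨ha, hb, hc⟩, ?_⟩
        have : a + b - c = d := by rw [he]; abel
        rw [this]
        exact hE hd
      · rintro ⟨a, b, c, d⟩ hq ⟨a', b', c', d'⟩ hq' h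
        simp only [Finset.coe_filter, Set.mem_setOf_eq, Finset.mem_product] at hq hq'
        simp only [Prod.mk.injEq] at h ⊢
        obtain ⟨h1, h2', h3⟩ := h
        subst h1; subst h2'; subst h3
        exact ⟨rfl, rfl, rfl, add_left_cancel (hq.2.symm.trans hq'.2)⟩
    -- Step 2 : triples count = sum over a of pair counts
    have step2 : ((E ×ˢ E ×ˢ E).filter
          (fun r => r.1 + r.2.1 - r.2.2 ∈ Paraboloid F)).card
        = ∑ a ∈ E, ((E ×ˢ E).filter
            (fun r => a + r.1 - r.2 ∈ Paraboloid F)).card := by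
      rw [Finset.card_filter, Finset.sum_product]
      refine Finset.sum_congr rfl fun a _ => ?_
      rw [Finset.card_filter]
    -- Step 3 : per-a bound
    have step3 : ∀ a ∈ E, (((E ×ˢ E).filter
        (fun r => a + r.1 - r.2 ∈ Paraboloid F)).card : ℝ)
        ≤ (N : ℝ) + C * (N : ℝ) ^ α := by
      intro a ha
      set Aa : Finset (F × F) := E.image (fun p => p.1 - a.1) with hAa
      set La : Finset (Set (F × F)) := (E.erase a).image (fun p => lineOf (p.1 - a.1)) with hLa
      have hsubinj : Set.InjOn (fun p : (F × F) × F => p.1 - a.1) ↑E := by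
        intro p hp q hq h
        exact hproj p hp q hq (by simpa using sub_left_injective h)
      have hlineinj : Set.InjOn (fun p : (F × F) × F => lineOf (p.1 - a.1)) ↑E := by
        intro p hp q hq h
        exact hsubinj hp hq (lineOf_inj hsq h)
      have hAcard : Aa.card = N := by
        rw [hAa, Finset.card_image_of_injOn hsubinj]
      have hLcard : La.card = N - 1 := by
        rw [hLa, Finset.card_image_of_injOn (hlineinj.mono (by
          intro p hp
          exact Finset.mem_coe.mpr (Finset.mem_of_mem_erase (Finset.mem_coe.mp hp)))),
          Finset.card_erase_of_mem ha]
      have hlines : ∀ ℓ ∈ La, IsLine ℓ := by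
        intro ℓ hℓ
        rw [hLa] at hℓ
        obtain ⟨p, hp, rfl⟩ := Finset.mem_image.mp hℓ
        apply isLine_lineOf
        intro hz
        have : p.1 = a.1 := by
          have := sub_eq_zero.mp hz
          simpa using this
        exact (Finset.mem_erase.mp hp).1 (hproj p (Finset.mem_of_mem_erase hp) a ha this)
      -- split : c = a part and c ≠ a part
      have hsplit : ((E ×ˢ E).filter (fun r => a + r.1 - r.2 ∈ Paraboloid F)).card
          ≤ ((E ×ˢ E).filter (fun r : ((F×F)×F) × ((F×F)×F) => r.2 = a)).card
            + ((E ×ˢ E).filter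
              (fun r => r.2 ≠ a ∧ a + r.1 - r.2 ∈ Paraboloid F)).card := by
        refine le_trans (Finset.card_le_card ?_) (Finset.card_union_le _ _)
        intro r hr
        simp only [Finset.mem_filter, Finset.mem_union] at hr ⊢
        by_cases hra : r.2 = a
        · exact Or.inl ⟨hr.1, hra⟩
        · exact Or.inr ⟨hr.1, hra, hr.2⟩
      have hdiag : ((E ×ˢ E).filter (fun r : ((F×F)×F) × ((F×F)×F) => r.2 = a)).card ≤ N := by
        apply Finset.card_le_card_of_injOn (fun r => r.1)
        · intro r hr
          simp only [Finset.mem_coe, Finset.mem_filter, Finset.mem_product] at hr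
          exact hr.1.1
        · intro r hr r' hr' h
          simp only [Finset.coe_filter, Set.mem_setOf_eq, Finset.mem_product] at hr hr'
          exact Prod.ext h (hr.2.trans hr'.2.symm)
      have hicc : incCount Aa La = ((Aa ×ˢ La).filter (fun p => p.1 ∈ p.2)).card := by
        have hset : {p : (F × F) × Set (F × F) | p.1 ∈ Aa ∧ p.2 ∈ La ∧ p.1 ∈ p.2}
            = ↑((Aa ×ˢ La).filter (fun p => p.1 ∈ p.2)) := by
          ext p
          simp only [Set.mem_setOf_eq, Finset.coe_filter, Finset.mem_product, and_assoc]
        rw [incCount, hset, Set.ncard_coe_finset]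
      have hbij : ((E ×ˢ E).filter
            (fun r => r.2 ≠ a ∧ a + r.1 - r.2 ∈ Paraboloid F)).card
          = ((Aa ×ˢ La).filter (fun p => p.1 ∈ p.2)).card := by
        apply Finset.card_bij (fun r _ => (r.1.1 - a.1, lineOf (r.2.1 - a.1)))
        · rintro ⟨b, c⟩ hr
          simp only [Finset.mem_filter, Finset.mem_product] at hr ⊢
          obtain ⟨⟨hb, hc⟩, hne, hP⟩ := hr
          refine ⟨⟨Finset.mem_image_of_mem _ hb,
            Finset.mem_image_of_mem _ (Finset.mem_erase.mpr ⟨hne, hc⟩)⟩, ?_⟩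
          exact (key_iff h2 (hE ha) (hE hb) (hE hc)).mpr hP
        · rintro ⟨b, c⟩ hr ⟨b', c'⟩ hr' h
          simp only [Finset.mem_filter, Finset.mem_product] at hr hr'
          simp only [Prod.mk.injEq] at h ⊢
          obtain ⟨hx, hl⟩ := h
          constructor
          · exact hproj b hr.1.1 b' hr'.1.1 (sub_left_injective hx)
          · exact hproj c hr.1.2 c' hr'.1.2 (sub_left_injective (lineOf_inj hsq hl))
        · rintro ⟨x, ℓ⟩ hp
          simp only [Finset.mem_filter, Finset.mem_product] at hp
          obtain ⟨⟨hx, hℓ⟩, hinc'⟩ := hp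
          obtain ⟨b, hb, rfl⟩ := Finset.mem_image.mp hx
          obtain ⟨c, hc, rfl⟩ := Finset.mem_image.mp hℓ
          refine ⟨(b, c), ?_, rfl⟩
          simp only [Finset.mem_filter, Finset.mem_product]
          exact ⟨⟨hb, Finset.mem_of_mem_erase hc⟩, (Finset.mem_erase.mp hc).1,
            (key_iff h2 (hE ha) (hE hb) (hE (Finset.mem_of_mem_erase hc))).mp hinc'⟩
      -- apply the incidence hypothesis
      have hN1 : (1 : ℝ) ≤ (N : ℝ) := by exact_mod_cast le_trans (by norm_num) hN2
      have hN2' : (2 : ℝ) ≤ (N : ℝ) := by exact_mod_cast hN2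
      have hLcardR : (La.card : ℝ) = (N : ℝ) - 1 := by
        rw [hLcard, Nat.cast_sub (by omega)]
        norm_num
      have hI : (incCount Aa La : ℝ) ≤ C * (N : ℝ) ^ α := by
        have := hinc Aa La hlines
          (by rw [hAcard]; linarith)
          (by rw [hAcard]; linarith)
          (by rw [hLcardR]; linarith)
          (by rw [hLcardR]; linarith)
        rwa [hAcard] at this
      have hfinal : (((E ×ˢ E).filter
          (fun r => a + r.1 - r.2 ∈ Paraboloid F)).card : ℝ)
          ≤ (N : ℝ) + (incCount Aa La : ℝ) := by
        have hnat : ((E ×ˢ E).filter (fun r => a + r.1 - r.2 ∈ Paraboloid F)).card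
            ≤ N + ((Aa ×ˢ La).filter (fun p => p.1 ∈ p.2)).card :=
          le_trans hsplit (Nat.add_le_add hdiag hbij.le)
        rw [← hicc] at hnat
        exact_mod_cast hnat
      linarith
    -- combine
    have htot : (((E ×ˢ E ×ˢ E ×ˢ E).filter
          (fun q => q.1 + q.2.1 = q.2.2.1 + q.2.2.2)).card : ℝ)
        ≤ (N : ℝ) * ((N : ℝ) + C * (N : ℝ) ^ α) := by
      calc (((E ×ˢ E ×ˢ E ×ˢ E).filter
            (fun q => q.1 + q.2.1 = q.2.2.1 + q.2.2.2)).card : ℝ)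
          ≤ (((E ×ˢ E ×ˢ E).filter
            (fun r => r.1 + r.2.1 - r.2.2 ∈ Paraboloid F)).card : ℝ) := by
            exact_mod_cast step1
        _ = ∑ a ∈ E, (((E ×ˢ E).filter
            (fun r => a + r.1 - r.2 ∈ Paraboloid F)).card : ℝ) := by
            rw [step2]; push_cast; ring
        _ ≤ ∑ _a ∈ E, ((N : ℝ) + C * (N : ℝ) ^ α) := Finset.sum_le_sum step3
        _ = (N : ℝ) * ((N : ℝ) + C * (N : ℝ) ^ α) := by
            rw [Finset.sum_const, nsmul_eq_mul]
    have hNnn : (0 : ℝ) ≤ (N : ℝ) := Nat.cast_nonneg N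
    calc (((E ×ˢ E ×ˢ E ×ˢ E).filter
          (fun q => q.1 + q.2.1 = q.2.2.1 + q.2.2.2)).card : ℝ)
        ≤ (N : ℝ) * ((N : ℝ) + C * (N : ℝ) ^ α) := htot
      _ ≤ (C + 1) * (N : ℝ) * ((N : ℝ) + (N : ℝ) ^ α) := by
          nlinarith [mul_nonneg hNnn hrpow, mul_nonneg (mul_nonneg hC hNnn) hNnn,
            mul_nonneg hC (mul_nonneg hNnn hrpow), mul_nonneg hNnn hNnn]
end

section
/- Let F be a finite field of odd characteristic with nontrivial additive character e. For the paraboloid P = {(ω, ω·ω) : ω ∈ F^2} ⊆ F^3 with normalized surface measure, the inverse Fourier transform (dσ)^∨(x) = (1/|P|) Σ_{ξ ∈ P} e(x·ξ) satisfies |(dσ)^∨(x)| ≤ |F|^{-1} for all x ≠ 0. (The Fourier dimension of P is 2.) -/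
section Aux

variable {F : Type*} [Field F] [Fintype F]

private lemma lin_sum_zero (e : AddChar F ℂ) (he : e ≠ 1) {c : F} (hc : c ≠ 0) :
    ∑ t : F, e (c * t) = 0 := by
  have h0 : e.mulShift c ≠ 0 := by
    have h1 : e.mulShift c ≠ 1 := by
      intro h
      exact he ((AddChar.mulShift_unit_eq_one_iff e (IsUnit.mk0 c hc)).mp h)
    simpa [show (0 : AddChar F ℂ) = 1 from rfl] using h1
  simpa using AddChar.sum_eq_zero_iff_ne_zero.2 h0

private lemma quad_sum_sq (hchar : ringChar F ≠ 2) (e : AddChar F ℂ) (he : e ≠ 1)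
    {a : F} (ha : a ≠ 0) (b : F) :
    (∑ t : F, e (b * t + a * (t * t))) *
      (starRingEnd ℂ) (∑ t : F, e (b * t + a * (t * t))) = (Fintype.card F : ℂ) := by
  have h2 : (2 : F) ≠ 0 := Ring.two_ne_zero hchar
  rw [map_sum]
  rw [Finset.sum_mul_sum]
  have key : ∀ s t : F, e (b * t + a * (t * t)) * (starRingEnd ℂ) (e (b * s + a * (s * s)))
      = e ((b * (t - s) + a * ((t - s) * (t - s))) + (2 * a * (t - s)) * s) := by
    intro s t
    rw [← AddChar.map_neg_eq_conj, ← AddChar.map_add_eq_mul]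
    ring_nf
  calc ∑ t : F, ∑ s : F, e (b * t + a * (t * t)) * (starRingEnd ℂ) (e (b * s + a * (s * s)))
      = ∑ s : F, ∑ t : F, e ((b * (t - s) + a * ((t - s) * (t - s))) + (2 * a * (t - s)) * s) := by
        rw [Finset.sum_comm]
        exact Finset.sum_congr rfl fun s _ => Finset.sum_congr rfl fun t _ => key s t
    _ = ∑ s : F, ∑ h : F, e ((b * h + a * (h * h)) + (2 * a * h) * s) := by
        refine Finset.sum_congr rfl fun s _ => ?_
        exact Fintype.sum_equiv (Equiv.subRight s)
          (fun t => e ((b * (t - s) + a * ((t - s) * (t - s))) + (2 * a * (t - s)) * s))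
          (fun h => e ((b * h + a * (h * h)) + (2 * a * h) * s))
          (fun t => by rw [Equiv.subRight_apply])
    _ = ∑ h : F, ∑ s : F, e (b * h + a * (h * h)) * e ((2 * a * h) * s) := by
        rw [Finset.sum_comm]
        exact Finset.sum_congr rfl fun h _ => Finset.sum_congr rfl fun s _ =>
          AddChar.map_add_eq_mul e _ _
    _ = ∑ h : F, e (b * h + a * (h * h)) * ∑ s : F, e ((2 * a * h) * s) := by
        simp [Finset.mul_sum]
    _ = (Fintype.card F : ℂ) := by
        rw [Finset.sum_eq_single 0]
        · simp [AddChar.map_zero_eq_one]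
        · intro h _ hh
          rw [lin_sum_zero e he (by simp [h2, ha, hh]), mul_zero]
        · simp

private lemma quad_sum_norm (hchar : ringChar F ≠ 2) (e : AddChar F ℂ) (he : e ≠ 1)
    {a : F} (ha : a ≠ 0) (b : F) :
    ‖∑ t : F, e (b * t + a * (t * t))‖ = Real.sqrt (Fintype.card F) := by
  have h := quad_sum_sq hchar e he ha b
  rw [Complex.mul_conj] at h
  have h2 : Complex.normSq (∑ t : F, e (b * t + a * (t * t))) = (Fintype.card F : ℝ) := by
    exact_mod_cast h
  rw [Complex.norm_def, h2]

end Aux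

/-- Fourier decay of the paraboloid: for `x ≠ 0`,
`|(dσ)^∨(x)| ≤ |F|⁻¹`, i.e. the paraboloid has Fourier dimension 2. -/
theorem paraboloid_fourier_decay {F : Type*} [Field F] [Fintype F]
    (hchar : ringChar F ≠ 2) (e : AddChar F ℂ) (he : e ≠ 1)
    (x : (F × F) × F) (hx : x ≠ 0) :
    ‖((Fintype.card F : ℂ) ^ 2)⁻¹ *
        ∑ ω : F × F, e (x.1.1 * ω.1 + x.1.2 * ω.2 + x.2 * (ω.1 * ω.1 + ω.2 * ω.2))‖ ≤
      (Fintype.card F : ℝ)⁻¹ := by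
  have hq : (0 : ℝ) < Fintype.card F := by exact_mod_cast Fintype.card_pos
  have hfac : ∑ ω : F × F, e (x.1.1 * ω.1 + x.1.2 * ω.2 + x.2 * (ω.1 * ω.1 + ω.2 * ω.2))
      = (∑ t : F, e (x.1.1 * t + x.2 * (t * t))) * (∑ t : F, e (x.1.2 * t + x.2 * (t * t))) := by
    rw [Finset.sum_mul_sum, Fintype.sum_prod_type]
    refine Finset.sum_congr rfl fun i _ => Finset.sum_congr rfl fun j _ => ?_
    rw [← AddChar.map_add_eq_mul]
    ring_nf
  rw [hfac, norm_mul, norm_mul, norm_inv, norm_pow, Complex.norm_natCast]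
  rcases eq_or_ne x.2 0 with h3 | h3
  · have hx1 : x.1.1 ≠ 0 ∨ x.1.2 ≠ 0 := by
      by_contra hcon
      push_neg at hcon
      exact hx (by ext <;> simp [hcon.1, hcon.2, h3])
    have hz : (∑ t : F, e (x.1.1 * t + x.2 * (t * t))) *
        (∑ t : F, e (x.1.2 * t + x.2 * (t * t))) = 0 := by
      rcases hx1 with h | h
      · rw [show (∑ t : F, e (x.1.1 * t + x.2 * (t * t))) = 0 by
          simpa [h3] using lin_sum_zero e he h, zero_mul]
      · rw [show (∑ t : F, e (x.1.2 * t + x.2 * (t * t))) = 0 by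
          simpa [h3] using lin_sum_zero e he h, mul_zero]
    rcases mul_eq_zero.mp hz with h | h <;> rw [h] <;> simp
  · rw [quad_sum_norm hchar e he h3, quad_sum_norm hchar e he h3,
      Real.mul_self_sqrt hq.le]
    rw [inv_mul_le_iff₀ (by positivity)]
    rw [sq]
    field_simp
    exact le_rfl
end
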